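/- Let f ∈ L¹[0,1] be nonnegative, let 0 < α < 1 and C > 1. Then the following are equivalent: (a) for every nonnegative x ∈ L¹[0,1] with x ≺ f, we have x^α ≺ C·f^α; (b) for every τ ∈ (0,1], τ^{1-α}·(∫_0^τ f*(t) dt)^α ≤ C·∫_0^τ (f*(t))^α dt. -/

import Mathlib

open MeasureTheory

/-- Decreasing rearrangement on `[0,1]` of a function `f : [0,1] → ℝ`. -/
noncomputable def decRear (f : ℝ → ℝ) (t : ℝ) : ℝ :=
  sInf {s : ℝ | 0 ≤ s ∧ (volume {u : ℝ | u ∈ Set.Icc (0:ℝ) 1 ∧ s < |f u|}).toReal ≤ t}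

/-- `x ≺ C·f` : Hardy–Littlewood majorization (with constant `C`) on `[0,1]`. -/
def HLMaj (x f : ℝ → ℝ) (C : ℝ) : Prop :=
  ∀ τ ∈ Set.Icc (0:ℝ) 1,
    ∫ t in (0:ℝ)..τ, decRear x t ≤ C * ∫ t in (0:ℝ)..τ, decRear f t

namespace Lemma5Aux

open Set ENNReal

/-- Distribution function. -/
noncomputable def DD (g : ℝ → ℝ) (s : ℝ) : ℝ≥0∞ :=
  volume {u : ℝ | u ∈ Set.Icc (0:ℝ) 1 ∧ s < |g u|}

/-- The defining set for the decreasing rearrangement. -/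
def SS (g : ℝ → ℝ) (t : ℝ) : Set ℝ := {s : ℝ | 0 ≤ s ∧ (DD g s).toReal ≤ t}

lemma decRear_eq (g : ℝ → ℝ) (t : ℝ) : decRear g t = sInf (SS g t) := rfl

lemma DD_le_one (g : ℝ → ℝ) (s : ℝ) : DD g s ≤ 1 := by
  have h1 : volume (Set.Icc (0:ℝ) 1) = 1 := by simp [Real.volume_Icc]
  calc DD g s ≤ volume (Set.Icc (0:ℝ) 1) := measure_mono (fun u hu => hu.1)
    _ = 1 := h1

lemma DD_ne_top (g : ℝ → ℝ) (s : ℝ) : DD g s ≠ ⊤ :=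
  ((DD_le_one g s).trans_lt ENNReal.one_lt_top).ne

lemma DD_anti (g : ℝ → ℝ) {s s' : ℝ} (h : s ≤ s') : DD g s' ≤ DD g s :=
  measure_mono fun u hu => ⟨hu.1, lt_of_le_of_lt h hu.2⟩

lemma bddBelow_SS (g : ℝ → ℝ) (t : ℝ) : BddBelow (SS g t) := ⟨0, fun s hs => hs.1⟩

lemma decRear_nonneg (g : ℝ → ℝ) (t : ℝ) : 0 ≤ decRear g t :=
  Real.sInf_nonneg fun s hs => hs.1

lemma decRear_le_of_mem {g : ℝ → ℝ} {t s : ℝ} (hs : s ∈ SS g t) : decRear g t ≤ s :=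
  csInf_le (bddBelow_SS g t) hs

/-- The infimum defining the decreasing rearrangement is attained. -/
lemma csInf_mem_SS {g : ℝ → ℝ} {t : ℝ} (hne : (SS g t).Nonempty) :
    sInf (SS g t) ∈ SS g t := by
  obtain ⟨s₀, hs₀⟩ := hne
  have ht0 : 0 ≤ t := le_trans ENNReal.toReal_nonneg hs₀.2
  set c := sInf (SS g t) with hc
  have hc0 : 0 ≤ c := decRear_nonneg g t
  refine ⟨hc0, ?_⟩
  apply ENNReal.toReal_le_of_le_ofReal ht0
  have key : {u : ℝ | u ∈ Set.Icc (0:ℝ) 1 ∧ c < |g u|}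
      = ⋃ n : ℕ, {u : ℝ | u ∈ Set.Icc (0:ℝ) 1 ∧ c + 1/(n+1) < |g u|} := by
    ext u
    simp only [Set.mem_setOf_eq, Set.mem_iUnion]
    constructor
    · rintro ⟨h1, h2⟩
      obtain ⟨n, hn⟩ := exists_nat_one_div_lt (sub_pos.mpr h2)
      exact ⟨n, h1, by linarith⟩
    · rintro ⟨n, h1, h2⟩
      have hpos : (0:ℝ) < 1/((n:ℝ)+1) := by positivity
      exact ⟨h1, by linarith⟩
  have hmono : Monotone fun n : ℕ => {u : ℝ | u ∈ Set.Icc (0:ℝ) 1 ∧ c + 1/(n+1) < |g u|} := by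
    intro m n hmn u hu
    have h1 : (1:ℝ)/((n:ℝ)+1) ≤ 1/((m:ℝ)+1) := by
      apply one_div_le_one_div_of_le (by positivity)
      exact by linarith [(Nat.cast_le (α := ℝ)).mpr hmn]
    exact ⟨hu.1, by have := hu.2; linarith⟩
  show DD g c ≤ ENNReal.ofReal t
  rw [show DD g c = volume {u : ℝ | u ∈ Set.Icc (0:ℝ) 1 ∧ c < |g u|} from rfl, key,
    Directed.measure_iUnion hmono.directed_le]
  apply iSup_le
  intro n
  have hclt : c < c + 1/((n:ℝ)+1) := lt_add_of_pos_right c (by positivity)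
  obtain ⟨s, hsS, hslt⟩ := exists_lt_of_csInf_lt ⟨s₀, hs₀⟩ hclt
  calc volume {u : ℝ | u ∈ Set.Icc (0:ℝ) 1 ∧ c + 1/(n+1) < |g u|}
      ≤ DD g s := measure_mono fun u hu => ⟨hu.1, lt_of_le_of_lt hslt.le hu.2⟩
    _ ≤ ENNReal.ofReal t :=
        (ENNReal.le_ofReal_iff_toReal_le (DD_ne_top g s) ht0).mpr hsS.2

lemma DD_rpow {g : ℝ → ℝ} (hg0 : ∀ u, 0 ≤ g u) {α : ℝ} (hα : 0 < α) {r : ℝ} (hr : 0 ≤ r) :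
    DD (fun u => g u ^ α) (r ^ α) = DD g r := by
  unfold DD
  congr 1
  ext u
  simp only [Set.mem_setOf_eq, and_congr_right_iff]
  intro _
  rw [abs_of_nonneg (Real.rpow_nonneg (hg0 u) α), abs_of_nonneg (hg0 u),
    Real.rpow_lt_rpow_iff hr (hg0 u) hα]

lemma SS_rpow {g : ℝ → ℝ} (hg0 : ∀ u, 0 ≤ g u) {α : ℝ} (hα : 0 < α) (t : ℝ) :
    SS (fun u => g u ^ α) t = (fun r => r ^ α) '' SS g t := by
  ext s
  constructor
  · rintro ⟨hs0, hD⟩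
    refine ⟨s ^ α⁻¹, ⟨Real.rpow_nonneg hs0 _, ?_⟩, Real.rpow_inv_rpow hs0 hα.ne'⟩
    rw [← DD_rpow hg0 hα (Real.rpow_nonneg hs0 α⁻¹), Real.rpow_inv_rpow hs0 hα.ne']
    exact hD
  · rintro ⟨r, ⟨hr0, hD⟩, rfl⟩
    exact ⟨Real.rpow_nonneg hr0 _, by rw [DD_rpow hg0 hα hr0]; exact hD⟩

lemma decRear_rpow {g : ℝ → ℝ} (hg0 : ∀ u, 0 ≤ g u) {α : ℝ} (hα0 : 0 < α) (t : ℝ) :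
    decRear (fun u => g u ^ α) t = decRear g t ^ α := by
  rcases Set.eq_empty_or_nonempty (SS g t) with hemp | hne
  · have h2 : SS (fun u => g u ^ α) t = ∅ := by
      rw [SS_rpow hg0 hα0, hemp, Set.image_empty]
    rw [decRear_eq, decRear_eq, hemp, h2, Real.sInf_empty, Real.zero_rpow hα0.ne']
  · have h1 := csInf_mem_SS hne
    have hne2 : (SS (fun u => g u ^ α) t).Nonempty := by
      rw [SS_rpow hg0 hα0]; exact hne.image _
    have h3 := csInf_mem_SS hne2
    apply le_antisymm
    · apply decRear_le_of_mem
      rw [SS_rpow hg0 hα0]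
      exact ⟨sInf (SS g t), h1, rfl⟩
    · have h3' : sInf (SS (fun u => g u ^ α) t) ∈ (fun r => r ^ α) '' SS g t := by
        rw [← SS_rpow hg0 hα0]; exact h3
      obtain ⟨r, hrS, hr⟩ := h3'
      calc decRear g t ^ α ≤ r ^ α :=
            Real.rpow_le_rpow (decRear_nonneg g t) (decRear_le_of_mem hrS) hα0.le
        _ = sInf (SS (fun u => g u ^ α) t) := hr
        _ = decRear (fun u => g u ^ α) t := (decRear_eq _ _).symm

lemma SS_nonempty {g : ℝ → ℝ} (hgi : IntegrableOn g (Set.Icc (0:ℝ) 1)) {t : ℝ}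
    (ht : 0 < t) : (SS g t).Nonempty := by
  set I := ∫⁻ u in Set.Icc (0:ℝ) 1, (‖g u‖₊ : ℝ≥0∞) with hI
  have hIfin : I ≠ ⊤ := hgi.2.ne
  set s := I.toReal / t + 1 with hs
  have hs0 : 0 < s := by positivity
  refine ⟨s, hs0.le, ?_⟩
  have h1 : DD g s ≤ (volume.restrict (Set.Icc (0:ℝ) 1)) {u : ℝ | ENNReal.ofReal s ≤ (‖g u‖₊ : ℝ≥0∞)} := by
    rw [Measure.restrict_apply' measurableSet_Icc]
    apply measure_mono
    rintro u ⟨hu1, hu2⟩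
    refine ⟨?_, hu1⟩
    simp only [Set.mem_setOf_eq]
    rw [← enorm_eq_nnnorm, Real.enorm_eq_ofReal_abs]
    exact ENNReal.ofReal_le_ofReal hu2.le
  have cheb : ENNReal.ofReal s * DD g s ≤ I := by
    calc ENNReal.ofReal s * DD g s
        ≤ ENNReal.ofReal s * (volume.restrict (Set.Icc (0:ℝ) 1)) {u : ℝ | ENNReal.ofReal s ≤ (‖g u‖₊ : ℝ≥0∞)} :=
          by gcongr
      _ ≤ I := mul_meas_ge_le_lintegral₀ hgi.aestronglyMeasurable.enorm _
  have h2 : DD g s ≤ ENNReal.ofReal t := by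
    by_contra hcon
    push_neg at hcon
    have h3 : ENNReal.ofReal s * ENNReal.ofReal t ≤ I :=
      le_trans (by gcongr) cheb
    rw [← ENNReal.ofReal_mul hs0.le] at h3
    have hst : s * t = I.toReal + t := by rw [hs]; field_simp
    rw [hst] at h3
    have hlt : I < ENNReal.ofReal (I.toReal + t) := by
      conv_lhs => rw [← ENNReal.ofReal_toReal hIfin]
      exact (ENNReal.ofReal_lt_ofReal_iff (by positivity)).mpr (by linarith)
    exact absurd h3 hlt.not_ge
  exact ENNReal.toReal_le_of_le_ofReal ht.le h2

lemma decRear_neg {g : ℝ → ℝ} {t : ℝ} (ht : t < 0) : decRear g t = 0 := by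
  have h : SS g t = ∅ := by
    apply Set.eq_empty_iff_forall_notMem.mpr
    rintro s ⟨_, hst⟩
    exact absurd (le_trans ENNReal.toReal_nonneg hst) ht.not_ge
  rw [decRear_eq, h, Real.sInf_empty]

lemma decRear_anti {g : ℝ → ℝ} (hgi : IntegrableOn g (Set.Icc (0:ℝ) 1)) :
    AntitoneOn (decRear g) (Set.Ioi 0) := fun t1 h1 _t2 _h2 h12 =>
  csInf_le_csInf (bddBelow_SS g _) (SS_nonempty hgi h1)
    (fun s hs => ⟨hs.1, hs.2.trans h12⟩)

lemma decRear_measurable {g : ℝ → ℝ} (hgi : IntegrableOn g (Set.Icc (0:ℝ) 1)) :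
    Measurable (decRear g) := by
  apply measurable_of_Iio
  intro a
  have hdecomp : decRear g ⁻¹' (Set.Iio a) =
      {t : ℝ | t < 0 ∧ decRear g t < a} ∪ {t : ℝ | t = 0 ∧ decRear g t < a}
        ∪ {t : ℝ | 0 < t ∧ decRear g t < a} := by
    ext t
    simp only [Set.mem_preimage, Set.mem_Iio, Set.mem_union, Set.mem_setOf_eq]
    rcases lt_trichotomy t 0 with h | h | h
    · tauto
    · tauto
    · tauto
  rw [hdecomp]
  refine MeasurableSet.union (MeasurableSet.union ?_ ?_) ?_
  · by_cases h0a : (0:ℝ) < a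
    · have : {t : ℝ | t < 0 ∧ decRear g t < a} = Set.Iio 0 := by
        ext t
        exact ⟨fun h => h.1, fun h => ⟨h, by rw [decRear_neg h]; exact h0a⟩⟩
      rw [this]; exact measurableSet_Iio
    · have : {t : ℝ | t < 0 ∧ decRear g t < a} = ∅ := by
        ext t
        simp only [Set.mem_setOf_eq, Set.mem_empty_iff_false, iff_false, not_and]
        intro ht
        rw [decRear_neg ht]
        exact fun h => h0a h
      rw [this]; exact MeasurableSet.empty
  · apply Set.Subsingleton.measurableSet
    intro t ht t' ht'
    rw [ht.1, ht'.1]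
  · apply Set.OrdConnected.measurableSet
    constructor
    intro t1 ht1 t2 _ht2 t ht
    have ht0 : 0 < t := lt_of_lt_of_le ht1.1 ht.1
    exact ⟨ht0, lt_of_le_of_lt (decRear_anti hgi ht1.1 ht0 ht.1) ht1.2⟩

lemma decRear_lintegral_le {g : ℝ → ℝ} (hgi : IntegrableOn g (Set.Icc (0:ℝ) 1)) :
    ∫⁻ t in Set.Ioc (0:ℝ) 1, ENNReal.ofReal (decRear g t)
      ≤ ∫⁻ u in Set.Icc (0:ℝ) 1, (‖g u‖₊ : ℝ≥0∞) := by
  have habs : (∫⁻ u in Set.Icc (0:ℝ) 1, (‖g u‖₊ : ℝ≥0∞))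
      = ∫⁻ u in Set.Icc (0:ℝ) 1, ENNReal.ofReal |g u| := by
    apply lintegral_congr
    intro u
    rw [← enorm_eq_nnnorm, Real.enorm_eq_ofReal_abs]
  have hgabs : AEMeasurable (fun u => |g u|) (volume.restrict (Set.Icc (0:ℝ) 1)) := by
    simpa [Real.norm_eq_abs] using hgi.aestronglyMeasurable.norm.aemeasurable
  rw [habs,
    lintegral_eq_lintegral_meas_lt _ (ae_of_all _ fun t => decRear_nonneg g t)
      (decRear_measurable hgi).aemeasurable,
    lintegral_eq_lintegral_meas_lt _ (ae_of_all _ fun u => abs_nonneg (g u)) hgabs]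
  apply lintegral_mono
  intro s
  rcases lt_or_ge s 0 with hs | hs
  · calc (volume.restrict (Set.Ioc (0:ℝ) 1)) {t : ℝ | s < decRear g t}
        ≤ volume.restrict (Set.Ioc (0:ℝ) 1) Set.univ := measure_mono (Set.subset_univ _)
      _ = ENNReal.ofReal 1 := by
          rw [Measure.restrict_apply_univ, Real.volume_Ioc, sub_zero]
      _ = volume (Set.Icc (0:ℝ) 1) := by rw [Real.volume_Icc, sub_zero]
      _ ≤ (volume.restrict (Set.Icc (0:ℝ) 1)) {u : ℝ | s < |g u|} := by
          rw [Measure.restrict_apply' measurableSet_Icc]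
          apply measure_mono
          intro u hu
          exact ⟨lt_of_lt_of_le hs (abs_nonneg (g u)), hu⟩
  · have hsub : {t : ℝ | s < decRear g t} ∩ Set.Ioc (0:ℝ) 1 ⊆ Set.Ioo 0 ((DD g s).toReal) := by
      rintro t ⟨ht1, ht2⟩
      refine ⟨ht2.1, ?_⟩
      by_contra hcon
      push_neg at hcon
      exact absurd (decRear_le_of_mem (⟨hs, hcon⟩ : s ∈ SS g t)) (not_le.mpr ht1)
    calc (volume.restrict (Set.Ioc (0:ℝ) 1)) {t : ℝ | s < decRear g t}
        = volume ({t : ℝ | s < decRear g t} ∩ Set.Ioc (0:ℝ) 1) :=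
          Measure.restrict_apply' measurableSet_Ioc
      _ ≤ volume (Set.Ioo (0:ℝ) ((DD g s).toReal)) := measure_mono hsub
      _ ≤ ENNReal.ofReal ((DD g s).toReal) := by rw [Real.volume_Ioo, sub_zero]
      _ = DD g s := ENNReal.ofReal_toReal (DD_ne_top g s)
      _ = (volume.restrict (Set.Icc (0:ℝ) 1)) {u : ℝ | s < |g u|} := by
          rw [Measure.restrict_apply' measurableSet_Icc]
          unfold DD
          congr 1
          ext u
          simp only [Set.mem_setOf_eq, Set.mem_inter_iff]
          tauto

lemma decRear_integrableOn {g : ℝ → ℝ} (hgi : IntegrableOn g (Set.Icc (0:ℝ) 1)) :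
    IntegrableOn (decRear g) (Set.Ioc (0:ℝ) 1) := by
  constructor
  · exact (decRear_measurable hgi).aestronglyMeasurable
  · show (∫⁻ t in Set.Ioc (0:ℝ) 1, (‖decRear g t‖₊ : ℝ≥0∞)) < ⊤
    have heq : (∫⁻ t in Set.Ioc (0:ℝ) 1, (‖decRear g t‖₊ : ℝ≥0∞))
        = ∫⁻ t in Set.Ioc (0:ℝ) 1, ENNReal.ofReal (decRear g t) := by
      apply lintegral_congr
      intro t
      rw [← enorm_eq_nnnorm, Real.enorm_eq_ofReal_abs, abs_of_nonneg (decRear_nonneg g t)]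
    rw [heq]
    exact lt_of_le_of_lt (decRear_lintegral_le hgi) hgi.2

lemma rpow_integrableOn {G : ℝ → ℝ} (hGm : AEStronglyMeasurable G (volume.restrict (Set.Ioc (0:ℝ) 1)))
    (hG0 : ∀ t, 0 ≤ G t) {s : Set ℝ} (hsub : s ⊆ Set.Ioc (0:ℝ) 1) (hs : MeasurableSet s)
    (hGi : IntegrableOn G s) {α : ℝ} (hα0 : 0 < α) (hα1 : α ≤ 1) :
    IntegrableOn (fun t => G t ^ α) s := by
  have hvol : volume s < ⊤ :=
    lt_of_le_of_lt (measure_mono hsub) (by rw [Real.volume_Ioc]; exact ENNReal.ofReal_lt_top)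
  have hmaj : Integrable (fun t => 1 + G t) (volume.restrict s) := by
    exact (integrableOn_const hvol.ne).add hGi
  apply Integrable.mono' hmaj
  · exact ((Real.continuous_rpow_const hα0.le).comp_aestronglyMeasurable
      (hGm.mono_measure (Measure.restrict_mono hsub le_rfl)))
  · apply ae_of_all
    intro t
    rw [Real.norm_eq_abs, abs_of_nonneg (Real.rpow_nonneg (hG0 t) _)]
    rcases le_or_gt (G t) 1 with h | h
    · have := Real.rpow_le_one (hG0 t) h hα0.le
      linarith [hG0 t]
    · have h2 : G t ^ α ≤ G t ^ (1:ℝ) := Real.rpow_le_rpow_of_exponent_le h.le hα1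
      rw [Real.rpow_one] at h2
      linarith

lemma power_mean {G : ℝ → ℝ} (hGm : Measurable G) (hG0 : ∀ t, 0 ≤ G t) {σ : ℝ}
    (hσ : 0 < σ) (hGi : IntegrableOn G (Set.Ioc (0:ℝ) σ)) {α : ℝ}
    (hGαi : IntegrableOn (fun t => G t ^ α) (Set.Ioc (0:ℝ) σ))
    (hα0 : 0 < α) (hα1 : α < 1) :
    ∫ t in Set.Ioc (0:ℝ) σ, G t ^ α
      ≤ σ ^ (1 - α) * (∫ t in Set.Ioc (0:ℝ) σ, G t) ^ α := by
  set μ := volume.restrict (Set.Ioc (0:ℝ) σ) with hμ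
  set B := ∫ t in Set.Ioc (0:ℝ) σ, G t with hB
  set A := ∫ t in Set.Ioc (0:ℝ) σ, G t ^ α with hA
  have hB0 : 0 ≤ B := setIntegral_nonneg measurableSet_Ioc fun t _ => hG0 t
  have hpq : Real.HolderConjugate (1/α) (1/(1-α)) := by
    rw [Real.holderConjugate_iff]; constructor
    · exact one_lt_one_div hα0 hα1
    · rw [one_div, inv_inv, one_div, inv_inv]; ring
  have hfm : AEMeasurable (fun t => ENNReal.ofReal (G t) ^ α) μ :=
    (ENNReal.continuous_rpow_const.measurable.comp
      (ENNReal.measurable_ofReal.comp hGm)).aemeasurable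
  have hold := ENNReal.lintegral_mul_le_Lp_mul_Lq μ hpq hfm
    (aemeasurable_const : AEMeasurable (fun _ : ℝ => (1:ℝ≥0∞)) μ)
  have e1 : ∀ t : ℝ, (ENNReal.ofReal (G t) ^ α) ^ (1/α) = ENNReal.ofReal (G t) := by
    intro t
    rw [← ENNReal.rpow_mul, mul_one_div_cancel hα0.ne', ENNReal.rpow_one]
  have e2 : (∫⁻ _a : ℝ, ((1:ℝ≥0∞)) ^ (1/(1-α)) ∂μ) = ENNReal.ofReal σ := by
    simp [hμ, ENNReal.one_rpow, lintegral_one, Measure.restrict_apply_univ, Real.volume_Ioc]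
  have e3 : (∫⁻ t : ℝ, ENNReal.ofReal (G t) ∂μ) = ENNReal.ofReal B :=
    (ofReal_integral_eq_lintegral_ofReal hGi (ae_of_all _ hG0)).symm
  have e4 : (∫⁻ t : ℝ, ENNReal.ofReal (G t) ^ α ∂μ) = ENNReal.ofReal A := by
    rw [hA, ofReal_integral_eq_lintegral_ofReal hGαi
      (ae_of_all _ fun t => Real.rpow_nonneg (hG0 t) α)]
    apply lintegral_congr
    intro t
    rw [ENNReal.ofReal_rpow_of_nonneg (hG0 t) hα0.le]
  have key : ENNReal.ofReal A ≤ ENNReal.ofReal (B ^ α * σ ^ (1 - α)) := by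
    calc ENNReal.ofReal A = ∫⁻ t : ℝ, (fun t => ENNReal.ofReal (G t) ^ α) t * (fun _ => (1:ℝ≥0∞)) t ∂μ := by
          rw [← e4]; apply lintegral_congr; intro t; simp
      _ ≤ (∫⁻ t : ℝ, ((fun t => ENNReal.ofReal (G t) ^ α) t) ^ (1/α) ∂μ) ^ (1/(1/α))
            * (∫⁻ t : ℝ, ((fun _ => (1:ℝ≥0∞)) t) ^ (1/(1-α)) ∂μ) ^ (1/(1/(1-α))) := hold
      _ = (ENNReal.ofReal B) ^ α * (ENNReal.ofReal σ) ^ (1-α) := by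
          rw [one_div_one_div, one_div_one_div]
          congr 1
          · congr 1
            rw [← e3]
            apply lintegral_congr
            intro t
            exact e1 t
          · rw [e2]
      _ = ENNReal.ofReal (B ^ α * σ ^ (1 - α)) := by
          rw [ENNReal.ofReal_rpow_of_nonneg hB0 hα0.le,
            ENNReal.ofReal_rpow_of_nonneg hσ.le (by linarith),
            ← ENNReal.ofReal_mul (Real.rpow_nonneg hB0 α)]
  have := (ENNReal.ofReal_le_ofReal_iff (by positivity)).mp key
  linarith [this, mul_comm (B ^ α) (σ ^ (1 - α))]

end Lemma5Aux

open Lemma5Aux in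
theorem lemma5 (f : ℝ → ℝ) (hf : ∀ t, 0 ≤ f t)
    (hfi : IntegrableOn f (Set.Icc (0:ℝ) 1))
    (α C : ℝ) (hα0 : 0 < α) (hα1 : α < 1) (hC : 1 < C) :
    (∀ x : ℝ → ℝ, (∀ t, 0 ≤ x t) → IntegrableOn x (Set.Icc (0:ℝ) 1) →
        HLMaj x f 1 → HLMaj (fun t => x t ^ α) (fun t => f t ^ α) C)
      ↔ (∀ τ ∈ Set.Ioc (0:ℝ) 1,
          τ ^ (1 - α) * (∫ t in (0:ℝ)..τ, decRear f t) ^ α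
            ≤ C * ∫ t in (0:ℝ)..τ, (decRear f t) ^ α) := by
  constructor
  · -- (a) → (b)
    intro H τ hτ
    obtain ⟨hτ0, hτ1⟩ := hτ
    have hFi : IntegrableOn (decRear f) (Set.Ioc (0:ℝ) 1) := decRear_integrableOn hfi
    have hFanti := decRear_anti hfi
    have hF0 : ∀ t, 0 ≤ decRear f t := decRear_nonneg f
    set Iτ := ∫ t in (0:ℝ)..τ, decRear f t with hIτ
    have hIτ0 : 0 ≤ Iτ := by
      rw [hIτ, intervalIntegral.integral_of_le hτ0.le]
      exact setIntegral_nonneg measurableSet_Ioc fun t _ => hF0 t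
    set c := Iτ / τ with hc
    have hc0 : 0 ≤ c := div_nonneg hIτ0 hτ0.le
    set x : ℝ → ℝ := (Set.Ioc (0:ℝ) τ).indicator (fun _ => c) with hxdef
    have hx0 : ∀ t, 0 ≤ x t := fun t => Set.indicator_nonneg (fun _ _ => hc0) t
    have hxi : IntegrableOn x (Set.Icc (0:ℝ) 1) := by
      apply Integrable.indicator _ measurableSet_Ioc
      exact integrableOn_const
        (by rw [Real.volume_Icc]; exact ENNReal.ofReal_ne_top)
    have habs : ∀ u, |x u| = x u := fun u => abs_of_nonneg (hx0 u)
    have hxval2 : ∀ t : ℝ, τ ≤ t → decRear x t = 0 := by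
      intro t htt
      refine le_antisymm ?_ (decRear_nonneg x t)
      apply decRear_le_of_mem
      refine ⟨le_refl 0, ?_⟩
      have hsub : {u : ℝ | u ∈ Set.Icc (0:ℝ) 1 ∧ (0:ℝ) < |x u|} ⊆ Set.Ioc 0 τ := by
        rintro u ⟨_hu1, hu2⟩
        by_contra hu3
        rw [habs u, hxdef, Set.indicator_of_notMem hu3] at hu2
        exact lt_irrefl 0 hu2
      have hle : DD x 0 ≤ ENNReal.ofReal τ := by
        calc DD x 0 ≤ volume (Set.Ioc (0:ℝ) τ) := measure_mono hsub
          _ = ENNReal.ofReal τ := by rw [Real.volume_Ioc, sub_zero]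
      exact le_trans (ENNReal.toReal_le_of_le_ofReal hτ0.le hle) htt
    have hxval1 : ∀ t ∈ Set.Ioo (0:ℝ) τ, decRear x t = c := by
      intro t ht
      have hmem : c ∈ SS x t := by
        refine ⟨hc0, ?_⟩
        have hempty : {u : ℝ | u ∈ Set.Icc (0:ℝ) 1 ∧ c < |x u|} = ∅ := by
          apply Set.eq_empty_iff_forall_notMem.mpr
          rintro u ⟨_hu1, hu2⟩
          rw [habs u] at hu2
          have hxc : x u ≤ c := by
            rw [hxdef]
            by_cases h : u ∈ Set.Ioc (0:ℝ) τ
            · rw [Set.indicator_of_mem h]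
            · rw [Set.indicator_of_notMem h]; exact hc0
          exact absurd hu2 (not_lt.mpr hxc)
        show (DD x c).toReal ≤ t
        rw [show DD x c = volume {u : ℝ | u ∈ Set.Icc (0:ℝ) 1 ∧ c < |x u|} from rfl, hempty]
        simp [ht.1.le]
      refine le_antisymm (decRear_le_of_mem hmem) ?_
      rw [decRear_eq]
      apply le_csInf ⟨c, hmem⟩
      rintro s ⟨_hs0, hst⟩
      by_contra hcs
      push_neg at hcs
      have hsub2 : Set.Ioc (0:ℝ) τ ⊆ {u : ℝ | u ∈ Set.Icc (0:ℝ) 1 ∧ s < |x u|} := by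
        intro u hu
        refine ⟨⟨hu.1.le, hu.2.trans hτ1⟩, ?_⟩
        rw [habs u, hxdef, Set.indicator_of_mem hu]
        exact hcs
      have h5 : ENNReal.ofReal τ ≤ DD x s := by
        calc ENNReal.ofReal τ = volume (Set.Ioc (0:ℝ) τ) := by
              rw [Real.volume_Ioc, sub_zero]
          _ ≤ DD x s := measure_mono hsub2
      have h6 : τ ≤ (DD x s).toReal := by
        have := ENNReal.toReal_mono (DD_ne_top x s) h5
        rwa [ENNReal.toReal_ofReal hτ0.le] at this
      linarith [ht.2]
    have hxint : ∀ σ : ℝ, 0 ≤ σ → ∫ t in (0:ℝ)..σ, decRear x t = c * min σ τ := by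
      intro σ hσ0
      rw [intervalIntegral.integral_of_le hσ0]
      have heq : Set.EqOn (decRear x) ((Set.Ioo (0:ℝ) τ).indicator (fun _ => c))
          (Set.Ioc (0:ℝ) σ) := by
        intro t ht
        rcases lt_or_ge t τ with h | h
        · rw [hxval1 t ⟨ht.1, h⟩]
          exact (Set.indicator_of_mem (⟨ht.1, h⟩ : t ∈ Set.Ioo (0:ℝ) τ) fun _ => c).symm
        · rw [hxval2 t h]
          exact (Set.indicator_of_notMem
            (fun hmem => absurd hmem.2 (not_lt.mpr h)) fun _ => c).symm
      rw [setIntegral_congr_fun measurableSet_Ioc heq,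
        setIntegral_indicator measurableSet_Ioo, setIntegral_const]
      have hvol : volume (Set.Ioc (0:ℝ) σ ∩ Set.Ioo 0 τ) = ENNReal.ofReal (min σ τ) := by
        apply le_antisymm
        · calc volume (Set.Ioc (0:ℝ) σ ∩ Set.Ioo 0 τ)
              ≤ volume (Set.Ioc (0:ℝ) (min σ τ)) := by
                apply measure_mono
                rintro t ⟨h1, h2⟩
                exact ⟨h1.1, le_min h1.2 h2.2.le⟩
            _ = ENNReal.ofReal (min σ τ) := by rw [Real.volume_Ioc, sub_zero]
        · calc ENNReal.ofReal (min σ τ) = volume (Set.Ioo (0:ℝ) (min σ τ)) := by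
                rw [Real.volume_Ioo, sub_zero]
            _ ≤ volume (Set.Ioc (0:ℝ) σ ∩ Set.Ioo 0 τ) := by
                apply measure_mono
                rintro t ⟨h1, h2⟩
                exact ⟨⟨h1, (lt_min_iff.mp h2).1.le⟩, h1, (lt_min_iff.mp h2).2⟩
      rw [measureReal_def, hvol, ENNReal.toReal_ofReal (le_min hσ0 hτ0.le), smul_eq_mul, mul_comm]
    have hmaj : HLMaj x f 1 := by
      intro σ hσ
      rw [hxint σ hσ.1, one_mul]
      rcases le_total τ σ with h | h
      · rw [min_eq_right h]
        have hcτ : c * τ = Iτ := by rw [hc]; field_simp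
        calc c * τ = Iτ := hcτ
          _ = ∫ t in Set.Ioc (0:ℝ) τ, decRear f t := by
              rw [hIτ, intervalIntegral.integral_of_le hτ0.le]
          _ ≤ ∫ t in Set.Ioc (0:ℝ) σ, decRear f t :=
              setIntegral_mono_set (hFi.mono_set (Set.Ioc_subset_Ioc_right hσ.2))
                (by filter_upwards with t using hF0 t)
                ((Set.Ioc_subset_Ioc_right h).eventuallyLE)
          _ = ∫ t in (0:ℝ)..σ, decRear f t := (intervalIntegral.integral_of_le hσ.1).symm
      · rw [min_eq_left h]
        rcases hσ.1.eq_or_lt with h0 | hσ0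
        · rw [← h0]; simp
        · set A := ∫ t in Set.Ioc (0:ℝ) σ, decRear f t with hA
          set B := ∫ t in Set.Ioc σ τ, decRear f t with hB
          have hIA : IntegrableOn (decRear f) (Set.Ioc 0 σ) :=
            hFi.mono_set (Set.Ioc_subset_Ioc_right (h.trans hτ1))
          have hIB : IntegrableOn (decRear f) (Set.Ioc σ τ) :=
            hFi.mono_set (fun t ht => ⟨hσ0.trans ht.1, ht.2.trans hτ1⟩)
          have hconst : ∀ a b : ℝ, IntegrableOn (fun _ : ℝ => decRear f σ) (Set.Ioc a b) :=
            fun a b => integrableOn_const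
              (by rw [Real.volume_Ioc]; exact ENNReal.ofReal_ne_top)
          have key1 : Iτ = A + B := by
            rw [hIτ, intervalIntegral.integral_of_le hτ0.le,
              ← Set.Ioc_union_Ioc_eq_Ioc hσ0.le h,
              setIntegral_union (Set.Ioc_disjoint_Ioc_of_le le_rfl) measurableSet_Ioc hIA hIB]
          have key2 : B ≤ (τ - σ) * decRear f σ := by
            calc B ≤ ∫ _t in Set.Ioc σ τ, decRear f σ :=
                  setIntegral_mono_on hIB (hconst σ τ) measurableSet_Ioc
                    (fun t ht => hFanti hσ0 (hσ0.trans ht.1) ht.1.le)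
              _ = (τ - σ) * decRear f σ := by
                  rw [setIntegral_const, measureReal_def, Real.volume_Ioc,
                    ENNReal.toReal_ofReal (by linarith), smul_eq_mul]
          have key3 : σ * decRear f σ ≤ A := by
            calc σ * decRear f σ = ∫ _t in Set.Ioc (0:ℝ) σ, decRear f σ := by
                  rw [setIntegral_const, measureReal_def, Real.volume_Ioc, sub_zero,
                    ENNReal.toReal_ofReal hσ0.le, smul_eq_mul]
              _ ≤ A := setIntegral_mono_on (hconst 0 σ) hIA measurableSet_Ioc
                  (fun t ht => hFanti ht.1 hσ0 ht.2)
          have h4 : σ * Iτ ≤ τ * A := by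
            nlinarith [mul_le_mul_of_nonneg_left key2 hσ0.le,
              mul_le_mul_of_nonneg_left key3 (sub_nonneg.mpr h)]
          rw [intervalIntegral.integral_of_le hσ.1, ← hA, hc]
          rw [div_mul_eq_mul_div, div_le_iff₀ hτ0]
          linarith
    have hH := H x hx0 hxi hmaj τ ⟨hτ0.le, hτ1⟩
    simp only [decRear_rpow hx0 hα0, decRear_rpow hf hα0] at hH
    have hlhs : ∫ t in (0:ℝ)..τ, decRear x t ^ α = τ * c ^ α := by
      rw [intervalIntegral.integral_of_le hτ0.le]
      have heq : Set.EqOn (fun t => decRear x t ^ α)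
          ((Set.Ioo (0:ℝ) τ).indicator (fun _ => c ^ α)) (Set.Ioc (0:ℝ) τ) := by
        intro t ht
        rcases lt_or_ge t τ with hlt | hge
        · show decRear x t ^ α = _
          rw [hxval1 t ⟨ht.1, hlt⟩]
          exact (Set.indicator_of_mem (⟨ht.1, hlt⟩ : t ∈ Set.Ioo (0:ℝ) τ) fun _ => c ^ α).symm
        · show decRear x t ^ α = _
          rw [hxval2 t hge, Real.zero_rpow hα0.ne']
          exact (Set.indicator_of_notMem
            (fun hmem => absurd hmem.2 (not_lt.mpr hge)) fun _ => c ^ α).symm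
      rw [setIntegral_congr_fun measurableSet_Ioc heq,
        setIntegral_indicator measurableSet_Ioo,
        Set.inter_eq_self_of_subset_right Set.Ioo_subset_Ioc_self, setIntegral_const, measureReal_def,
        Real.volume_Ioo, sub_zero, ENNReal.toReal_ofReal hτ0.le, smul_eq_mul]
    rw [hlhs] at hH
    have hfinal : τ ^ (1-α) * Iτ ^ α = τ * c ^ α := by
      rw [hc, Real.div_rpow hIτ0 hτ0.le, Real.rpow_sub hτ0, Real.rpow_one]
      field_simp
    rw [hfinal]
    exact hH
  · -- (b) → (a)
    intro H x hx0 hxi hmaj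
    intro σ hσ
    simp only [decRear_rpow hx0 hα0, decRear_rpow hf hα0]
    rcases hσ.1.eq_or_lt with h0 | hσ0
    · rw [← h0]; simp
    · have hσ1 := hσ.2
      have hGi1 : IntegrableOn (decRear x) (Set.Ioc (0:ℝ) 1) := decRear_integrableOn hxi
      have hFi1 : IntegrableOn (decRear f) (Set.Ioc (0:ℝ) 1) := decRear_integrableOn hfi
      have hGi : IntegrableOn (decRear x) (Set.Ioc 0 σ) :=
        hGi1.mono_set (Set.Ioc_subset_Ioc_right hσ1)
      have hGαi : IntegrableOn (fun t => decRear x t ^ α) (Set.Ioc 0 σ) :=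
        rpow_integrableOn hGi1.aestronglyMeasurable (decRear_nonneg x)
          (Set.Ioc_subset_Ioc_right hσ1) measurableSet_Ioc hGi hα0 hα1.le
      have hFαi : IntegrableOn (fun t => decRear f t ^ α) (Set.Ioc 0 σ) :=
        rpow_integrableOn hFi1.aestronglyMeasurable (decRear_nonneg f)
          (Set.Ioc_subset_Ioc_right hσ1) measurableSet_Ioc
          (hFi1.mono_set (Set.Ioc_subset_Ioc_right hσ1)) hα0 hα1.le
      rw [intervalIntegral.integral_of_le hσ.1, intervalIntegral.integral_of_le hσ.1]
      have pm := power_mean (decRear_measurable hxi) (decRear_nonneg x) hσ0 hGi hGαi hα0 hα1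
      have hmaj' : ∫ t in Set.Ioc (0:ℝ) σ, decRear x t
          ≤ ∫ t in Set.Ioc (0:ℝ) σ, decRear f t := by
        have h := hmaj σ hσ
        rwa [one_mul, intervalIntegral.integral_of_le hσ.1,
          intervalIntegral.integral_of_le hσ.1] at h
      have hG0' : 0 ≤ ∫ t in Set.Ioc (0:ℝ) σ, decRear x t :=
        setIntegral_nonneg measurableSet_Ioc fun t _ => decRear_nonneg x t
      have h1 : (∫ t in Set.Ioc (0:ℝ) σ, decRear x t) ^ α
          ≤ (∫ t in Set.Ioc (0:ℝ) σ, decRear f t) ^ α :=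
        Real.rpow_le_rpow hG0' hmaj' hα0.le
      have h2 := H σ ⟨hσ0, hσ1⟩
      rw [intervalIntegral.integral_of_le hσ.1, intervalIntegral.integral_of_le hσ.1] at h2
      calc ∫ t in Set.Ioc (0:ℝ) σ, decRear x t ^ α
          ≤ σ ^ (1-α) * (∫ t in Set.Ioc (0:ℝ) σ, decRear x t) ^ α := pm
        _ ≤ σ ^ (1-α) * (∫ t in Set.Ioc (0:ℝ) σ, decRear f t) ^ α :=
            mul_le_mul_of_nonneg_left h1 (Real.rpow_nonneg hσ.1 _)
        _ ≤ C * ∫ t in Set.Ioc (0:ℝ) σ, decRear f t ^ α := h2
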